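/- There exists a preorder ≽ on Δ that simultaneously satisfies Pareto, Converse Pareto, Good Expectations, the Stochastic Dominance axiom, and Negative Dominance. -/

import Mathlib

open scoped BigOperators

noncomputable section

/-- A finite-support lottery on `X`. -/
structure Lottery (X : Type*) where
  val : X →₀ ℝ
  nonneg : ∀ x, 0 ≤ val x
  total : val.sum (fun _ p => p) = 1

namespace Lottery

variable {X : Type*}

/-- The point-mass lottery at `x`. -/
def delta (x : X) : Lottery X where
  val := Finsupp.single x 1
  nonneg := fun y => by
    classical
    rw [Finsupp.single_apply]
    split <;> norm_num
  total := by
    rw [Finsupp.sum_single_index rfl]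

/-- The mixture `α • f + (1 - α) • g`. -/
def mix (α : ℝ) (h1 : 0 ≤ α) (h2 : α ≤ 1) (f g : Lottery X) : Lottery X where
  val := α • f.val + (1 - α) • g.val
  nonneg := fun x => by
    have hf := f.nonneg x
    have hg := g.nonneg x
    simp only [Finsupp.coe_add, Finsupp.coe_smul, Pi.add_apply, Pi.smul_apply, smul_eq_mul]
    nlinarith
  total := by
    rw [Finsupp.sum_add_index' (fun _ => rfl) (fun _ _ _ => rfl)]
    rw [Finsupp.sum_smul_index (fun _ => rfl), Finsupp.sum_smul_index (fun _ => rfl)]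
    rw [← Finsupp.mul_sum, ← Finsupp.mul_sum, f.total, g.total]
    ring

/-- The uniform lottery on `a` and `b`, written `a/b` in the paper. -/
def unif (a b : X) : Lottery X := mix (1/2) (by norm_num) (by norm_num) (delta a) (delta b)

/-- Strict preference. -/
def SPref (R : Lottery X → Lottery X → Prop) (f g : Lottery X) : Prop := R f g ∧ ¬ R g f

/-- Indifference. -/
def Indiff (R : Lottery X → Lottery X → Prop) (f g : Lottery X) : Prop := R f g ∧ R g f

/-- Incomparability. -/
def Incomp (R : Lottery X → Lottery X → Prop) (f g : Lottery X) : Prop := ¬ R f g ∧ ¬ R g f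

/-- Negative Dominance. -/
def NegDominance (R : Lottery X → Lottery X → Prop) : Prop :=
  ∀ f g : Lottery X, SPref R f g →
    ∃ o ∈ f.val.support, ∃ o' ∈ g.val.support, SPref R (delta o) (delta o')

/-- Independence. -/
def Independence (R : Lottery X → Lottery X → Prop) : Prop :=
  ∀ f g h : Lottery X, ∀ α : ℝ, ∀ (h1 : 0 < α) (h2 : α < 1),
    (R f g ↔ R (mix α h1.le h2.le f h) (mix α h1.le h2.le g h))

/-- The coordinatewise expectation of a lottery on `ℝ²`. -/
def expLot (f : Lottery (ℝ × ℝ)) : ℝ × ℝ :=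
  (f.val.sum fun o p => p * o.1, f.val.sum fun o p => p * o.2)

/-- Pareto. -/
def Pareto (R : Lottery (ℝ × ℝ) → Lottery (ℝ × ℝ) → Prop) : Prop :=
  ∀ x y x' y' : ℝ, x' ≤ x → y' ≤ y → R (delta (x, y)) (delta (x', y'))

/-- Converse Pareto. -/
def ConvPareto (R : Lottery (ℝ × ℝ) → Lottery (ℝ × ℝ) → Prop) : Prop :=
  ∀ x y x' y' : ℝ, R (delta (x, y)) (delta (x', y')) → x' ≤ x ∧ y' ≤ y

/-- Two outcomes are unidimensional with each other if they differ in at most one coordinate. -/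
def UniWith {A B : Type*} (o o' : A × B) : Prop := o.1 = o'.1 ∨ o.2 = o'.2

/-- A lottery is unidimensional if any two outcomes in its support are unidimensional
with each other. -/
def Unidim {A B : Type*} (f : Lottery (A × B)) : Prop :=
  ∀ o ∈ f.val.support, ∀ o' ∈ f.val.support, UniWith o o'

/-- Expectationalism. -/
def Expectationalism (R : Lottery (ℝ × ℝ) → Lottery (ℝ × ℝ) → Prop) : Prop :=
  ∀ f, Indiff R f (delta (expLot f))

/-- Unidimensional Expectations. -/
def UnidimExp (R : Lottery (ℝ × ℝ) → Lottery (ℝ × ℝ) → Prop) : Prop :=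
  ∀ f, Unidim f → Indiff R f (delta (expLot f))

end Lottery

open Lottery

/-- A lottery is good if all outcomes in its support are pairwise comparable. -/
def Good (R : Lottery (ℝ × ℝ) → Lottery (ℝ × ℝ) → Prop) (f : Lottery (ℝ × ℝ)) : Prop :=
  ∀ o ∈ f.val.support, ∀ o' ∈ f.val.support, R (delta o) (delta o') ∨ R (delta o') (delta o)

open Classical in
/-- `f` stochastically dominates `g` in `R`. -/
def StochDom (R : Lottery (ℝ × ℝ) → Lottery (ℝ × ℝ) → Prop) (f g : Lottery (ℝ × ℝ)) : Prop :=
  ∃ n : ℕ, 0 < n ∧ ∃ a b : Fin n → ℝ × ℝ, ∃ p : Fin n → ℝ,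
    (∀ i, 0 < p i ∧ p i ≤ 1) ∧ (∑ i, p i = 1) ∧
    (∀ o : ℝ × ℝ, f.val o = ∑ i ∈ Finset.univ.filter (fun i => a i = o), p i) ∧
    (∀ o : ℝ × ℝ, g.val o = ∑ i ∈ Finset.univ.filter (fun i => b i = o), p i) ∧
    (∀ i, R (delta (a i)) (delta (b i))) ∧ (∃ i, SPref R (delta (a i)) (delta (b i)))

/-- The Stochastic Dominance axiom. -/
def StochDomAx (R : Lottery (ℝ × ℝ) → Lottery (ℝ × ℝ) → Prop) : Prop :=
  ∀ f g : Lottery (ℝ × ℝ), StochDom R f g → SPref R f g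

/-- Good Expectations. -/
def GoodExp (R : Lottery (ℝ × ℝ) → Lottery (ℝ × ℝ) → Prop) : Prop :=
  ∀ f : Lottery (ℝ × ℝ), Good R f → Indiff R f (delta (expLot f))


section Statement10Proof

open Finset

/-- Weak coupling dominance with respect to the product order on `ℝ × ℝ`. -/
def Cpl (f g : Lottery (ℝ × ℝ)) : Prop :=
  ∃ n : ℕ, ∃ a b : Fin n → ℝ × ℝ, ∃ p : Fin n → ℝ,
    (∀ i, 0 ≤ p i) ∧
    (∀ o, f.val o = ∑ i ∈ Finset.univ.filter (fun i => a i = o), p i) ∧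
    (∀ o, g.val o = ∑ i ∈ Finset.univ.filter (fun i => b i = o), p i) ∧
    (∀ i, b i ≤ a i)

/-- Support is a chain in the product order. -/
def ChainL (f : Lottery (ℝ × ℝ)) : Prop :=
  ∀ o ∈ f.val.support, ∀ o' ∈ f.val.support, o ≤ o' ∨ o' ≤ o

/-- The preorder witnessing Statement 10. -/
def PrefRel (f g : Lottery (ℝ × ℝ)) : Prop :=
  Relation.ReflTransGen Cpl f g ∨
    ∃ h c : Lottery (ℝ × ℝ), ChainL h ∧ ChainL c ∧ Relation.ReflTransGen Cpl f h ∧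
      expLot c ≤ expLot h ∧ Relation.ReflTransGen Cpl c g

namespace Statement10

lemma lottery_ext {f g : Lottery (ℝ × ℝ)} (h : f.val = g.val) : f = g := by
  cases f; cases g; simpa using h

lemma delta_val (x o : ℝ × ℝ) : (delta x).val o = if x = o then 1 else 0 := by
  classical
  simp [delta, Finsupp.single_apply]

lemma supp_delta (x : ℝ × ℝ) : (delta x).val.support = {x} := by
  classical
  simp [delta, Finsupp.support_single_ne_zero]

lemma total_sum (f : Lottery (ℝ × ℝ)) : ∑ o ∈ f.val.support, f.val o = 1 := f.total

lemma exp_delta (x : ℝ × ℝ) : expLot (delta x) = x := by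
  classical
  have key : ∀ φ : ℝ × ℝ → ℝ, ((delta x).val.sum fun o p => p * φ o) = φ x := by
    intro φ
    rw [show (delta x).val = Finsupp.single x 1 from rfl,
      Finsupp.sum_single_index (by ring)]
    ring
  exact Prod.ext_iff.2 ⟨key _, key _⟩

lemma sum_repr {n : ℕ} (f : Lottery (ℝ × ℝ)) (a : Fin n → ℝ × ℝ) (p : Fin n → ℝ)
    (hm : ∀ o, f.val o = ∑ i ∈ Finset.univ.filter (fun i => a i = o), p i)
    (φ : ℝ × ℝ → ℝ) :
    (f.val.sum fun o q => q * φ o) = ∑ i, p i * φ (a i) := by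
  classical
  have hsub : f.val.support ⊆ Finset.univ.image a := by
    intro o ho
    rw [Finsupp.mem_support_iff, hm o] at ho
    obtain ⟨i, hi, -⟩ := Finset.exists_ne_zero_of_sum_ne_zero ho
    exact Finset.mem_image.2 ⟨i, Finset.mem_univ i, (Finset.mem_filter.1 hi).2⟩
  rw [Finsupp.sum_of_support_subset f.val hsub (fun o q => q * φ o) (fun o _ => zero_mul _)]
  rw [← Finset.sum_fiberwise_of_maps_to
      (fun i _ => Finset.mem_image_of_mem a (Finset.mem_univ i)) (fun i => p i * φ (a i))]
  refine Finset.sum_congr rfl fun o ho => ?_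
  rw [hm o, Finset.sum_mul]
  refine Finset.sum_congr rfl fun i hi => ?_
  rw [(Finset.mem_filter.1 hi).2]

lemma exp_fst_repr {n : ℕ} {f : Lottery (ℝ × ℝ)} {a : Fin n → ℝ × ℝ} {p : Fin n → ℝ}
    (hm : ∀ o, f.val o = ∑ i ∈ Finset.univ.filter (fun i => a i = o), p i) :
    (expLot f).1 = ∑ i, p i * (a i).1 := sum_repr f a p hm _

lemma exp_snd_repr {n : ℕ} {f : Lottery (ℝ × ℝ)} {a : Fin n → ℝ × ℝ} {p : Fin n → ℝ}
    (hm : ∀ o, f.val o = ∑ i ∈ Finset.univ.filter (fun i => a i = o), p i) :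
    (expLot f).2 = ∑ i, p i * (a i).2 := sum_repr f a p hm _

lemma cpl_exp_le {f g : Lottery (ℝ × ℝ)} (h : Cpl f g) : expLot g ≤ expLot f := by
  obtain ⟨n, a, b, p, hp, hf, hg, hab⟩ := h
  rw [Prod.le_def, exp_fst_repr hf, exp_fst_repr hg, exp_snd_repr hf, exp_snd_repr hg]
  exact ⟨Finset.sum_le_sum fun i _ =>
      mul_le_mul_of_nonneg_left ((Prod.le_def.1 (hab i)).1) (hp i),
    Finset.sum_le_sum fun i _ =>
      mul_le_mul_of_nonneg_left ((Prod.le_def.1 (hab i)).2) (hp i)⟩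

lemma cpl_eq {f g : Lottery (ℝ × ℝ)} (hc : Cpl f g) (he : expLot f = expLot g) : f = g := by
  classical
  obtain ⟨n, a, b, p, hp, hf, hg, hab⟩ := hc
  have h1 : ∑ i, p i * (((a i).1 - (b i).1) + ((a i).2 - (b i).2)) = 0 := by
    have e1 := congrArg Prod.fst he
    have e2 := congrArg Prod.snd he
    rw [exp_fst_repr hf, exp_fst_repr hg] at e1
    rw [exp_snd_repr hf, exp_snd_repr hg] at e2
    have expand : ∑ i, p i * (((a i).1 - (b i).1) + ((a i).2 - (b i).2))
        = ((∑ i, p i * (a i).1) - ∑ i, p i * (b i).1)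
          + ((∑ i, p i * (a i).2) - ∑ i, p i * (b i).2) := by
      rw [← Finset.sum_sub_distrib, ← Finset.sum_sub_distrib, ← Finset.sum_add_distrib]
      exact Finset.sum_congr rfl fun i _ => by ring
    rw [expand, e1, e2]; ring
  have hterm := (Finset.sum_eq_zero_iff_of_nonneg (fun i _ => by
    have hd1 : (0:ℝ) ≤ (a i).1 - (b i).1 := sub_nonneg.2 (Prod.le_def.1 (hab i)).1
    have hd2 : (0:ℝ) ≤ (a i).2 - (b i).2 := sub_nonneg.2 (Prod.le_def.1 (hab i)).2
    exact mul_nonneg (hp i) (by linarith))).1 h1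
  have key : ∀ i, p i = 0 ∨ a i = b i := by
    intro i
    by_cases hpi : p i = 0
    · exact Or.inl hpi
    · right
      have h0 := hterm i (Finset.mem_univ i)
      have hd1 : (0:ℝ) ≤ (a i).1 - (b i).1 := sub_nonneg.2 (Prod.le_def.1 (hab i)).1
      have hd2 : (0:ℝ) ≤ (a i).2 - (b i).2 := sub_nonneg.2 (Prod.le_def.1 (hab i)).2
      rcases mul_eq_zero.1 h0 with h | h
      · exact absurd h hpi
      · exact Prod.ext_iff.2 ⟨by nlinarith, by nlinarith⟩
  apply lottery_ext
  ext o
  rw [hf, hg, Finset.sum_filter, Finset.sum_filter]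
  refine Finset.sum_congr rfl fun i _ => ?_
  rcases key i with h | h
  · simp [h]
  · rw [h]

lemma mem_supp_of_pos {f : Lottery (ℝ × ℝ)} {n : ℕ} {a : Fin n → ℝ × ℝ} {p : Fin n → ℝ}
    (hp : ∀ i, 0 ≤ p i)
    (hm : ∀ o, f.val o = ∑ i ∈ Finset.univ.filter (fun i => a i = o), p i)
    {i : Fin n} (hpi : p i ≠ 0) : a i ∈ f.val.support := by
  classical
  rw [Finsupp.mem_support_iff, hm]
  have hle : p i ≤ ∑ j ∈ Finset.univ.filter (fun j => a j = a i), p j :=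
    Finset.single_le_sum (fun j _ => hp j) (by simp)
  have : 0 < p i := lt_of_le_of_ne (hp i) (Ne.symm hpi)
  exact ne_of_gt (lt_of_lt_of_le this hle)

lemma exists_pos_index {f : Lottery (ℝ × ℝ)} {n : ℕ} {a : Fin n → ℝ × ℝ} {p : Fin n → ℝ}
    (hm : ∀ o, f.val o = ∑ i ∈ Finset.univ.filter (fun i => a i = o), p i)
    {x : ℝ × ℝ} (hx : x ∈ f.val.support) : ∃ i, p i ≠ 0 ∧ a i = x := by
  classical
  rw [Finsupp.mem_support_iff, hm] at hx
  obtain ⟨i, hi, hpi⟩ := Finset.exists_ne_zero_of_sum_ne_zero hx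
  exact ⟨i, hpi, (Finset.mem_filter.1 hi).2⟩

lemma cpl_witness {f g : Lottery (ℝ × ℝ)} (hc : Cpl f g) (hne : expLot f ≠ expLot g) :
    ∃ o ∈ f.val.support, ∃ o' ∈ g.val.support, o' ≤ o ∧ o' ≠ o := by
  classical
  obtain ⟨n, a, b, p, hp, hf, hg, hab⟩ := hc
  by_cases key : ∀ i, p i = 0 ∨ a i = b i
  · exfalso
    apply hne
    have congrsum : ∀ φ : ℝ × ℝ → ℝ, ∑ i, p i * φ (a i) = ∑ i, p i * φ (b i) := by
      intro φ
      refine Finset.sum_congr rfl fun i _ => ?_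
      rcases key i with h | h
      · simp [h]
      · rw [h]
    refine Prod.ext_iff.2 ⟨?_, ?_⟩
    · rw [exp_fst_repr hf, exp_fst_repr hg]; exact congrsum _
    · rw [exp_snd_repr hf, exp_snd_repr hg]; exact congrsum _
  · push_neg at key
    obtain ⟨i, hpi, hne'⟩ := key
    exact ⟨a i, mem_supp_of_pos hp hf hpi, b i,
      mem_supp_of_pos (f := g) hp hg hpi, hab i, fun e => hne' e.symm⟩

lemma cpl_up {f g : Lottery (ℝ × ℝ)} (hc : Cpl f g) {x : ℝ × ℝ} (hx : x ∈ g.val.support) :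
    ∃ o ∈ f.val.support, x ≤ o := by
  obtain ⟨n, a, b, p, hp, hf, hg, hab⟩ := hc
  obtain ⟨i, hpi, hbi⟩ := exists_pos_index hg hx
  exact ⟨a i, mem_supp_of_pos hp hf hpi, hbi ▸ hab i⟩

lemma cpl_down {f g : Lottery (ℝ × ℝ)} (hc : Cpl f g) {x : ℝ × ℝ} (hx : x ∈ f.val.support) :
    ∃ o ∈ g.val.support, o ≤ x := by
  obtain ⟨n, a, b, p, hp, hf, hg, hab⟩ := hc
  obtain ⟨i, hpi, hai⟩ := exists_pos_index hf hx
  exact ⟨b i, mem_supp_of_pos (f := g) hp hg hpi, hai ▸ hab i⟩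

lemma rtc_exp_le {f g : Lottery (ℝ × ℝ)} (h : Relation.ReflTransGen Cpl f g) :
    expLot g ≤ expLot f := by
  induction h with
  | refl => exact le_rfl
  | tail _ h2 ih => exact le_trans (cpl_exp_le h2) ih

lemma rtc_eq {f g : Lottery (ℝ × ℝ)} (h : Relation.ReflTransGen Cpl f g) :
    expLot f = expLot g → f = g := by
  induction h with
  | refl => exact fun _ => rfl
  | @tail k g h1 h2 ih =>
    intro he
    have e1 : expLot g ≤ expLot k := cpl_exp_le h2
    have e2 : expLot k ≤ expLot f := rtc_exp_le h1
    have efk : expLot f = expLot k := le_antisymm (le_of_eq he |>.trans e1) e2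
    have ekg : expLot k = expLot g := efk ▸ he
    exact (ih efk).trans (cpl_eq h2 ekg)

lemma rtc_up {f g : Lottery (ℝ × ℝ)} (h : Relation.ReflTransGen Cpl f g) :
    ∀ x ∈ g.val.support, ∃ o ∈ f.val.support, x ≤ o := by
  induction h with
  | refl => exact fun x hx => ⟨x, hx, le_rfl⟩
  | tail _ h2 ih =>
    intro x hx
    obtain ⟨y, hy, hxy⟩ := cpl_up h2 hx
    obtain ⟨o, ho, hyo⟩ := ih y hy
    exact ⟨o, ho, hxy.trans hyo⟩

lemma rtc_down {f g : Lottery (ℝ × ℝ)} (h : Relation.ReflTransGen Cpl f g) :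
    ∀ x ∈ f.val.support, ∃ o ∈ g.val.support, o ≤ x := by
  induction h with
  | refl => exact fun x hx => ⟨x, hx, le_rfl⟩
  | tail _ h2 ih =>
    intro x hx
    obtain ⟨y, hy, hyx⟩ := ih x hx
    obtain ⟨o, ho, hoy⟩ := cpl_down h2 hy
    exact ⟨o, ho, hoy.trans hyx⟩

lemma rtc_witness {f g : Lottery (ℝ × ℝ)} (h : Relation.ReflTransGen Cpl f g) :
    expLot f ≠ expLot g →
    ∃ o ∈ f.val.support, ∃ o' ∈ g.val.support, o' ≤ o ∧ o' ≠ o := by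
  induction h with
  | refl => exact fun hne => absurd rfl hne
  | @tail k g h1 h2 ih =>
    intro hne
    by_cases hkg : expLot k = expLot g
    · have hk : k = g := cpl_eq h2 hkg
      subst hk
      exact ih (fun e => hne (e.trans hkg))
    · obtain ⟨u, hu, o', ho', h1', h2'⟩ := cpl_witness h2 hkg
      obtain ⟨o, ho, huo⟩ := rtc_up h1 u hu
      refine ⟨o, ho, o', ho', h1'.trans huo, fun e => h2' ?_⟩
      have : u ≤ o' := by rw [e]; exact huo
      exact le_antisymm h1' this

lemma supp_nonempty (f : Lottery (ℝ × ℝ)) : f.val.support.Nonempty := by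
  rcases Finset.eq_empty_or_nonempty f.val.support with h | h
  · exfalso
    have := total_sum f
    rw [h] at this
    simp at this
  · exact h

lemma chain_max {f : Lottery (ℝ × ℝ)} (hc : ChainL f) :
    ∃ M ∈ f.val.support, ∀ x ∈ f.val.support, x ≤ M := by
  obtain ⟨M, hM, hmax'⟩ := Finset.exists_maximal (supp_nonempty f)
  have hmax : ∀ x ∈ f.val.support, ¬ M < x := fun x hx hlt => hlt.2 (hmax' hx hlt.1)
  refine ⟨M, hM, fun x hx => ?_⟩
  rcases hc x hx M hM with h | h
  · exact h
  · exact le_of_eq (eq_of_le_of_not_lt h (hmax x hx)).symm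

lemma chain_min {f : Lottery (ℝ × ℝ)} (hc : ChainL f) :
    ∃ m ∈ f.val.support, ∀ x ∈ f.val.support, m ≤ x := by
  obtain ⟨m, hm, hmin'⟩ := Finset.exists_minimal (supp_nonempty f)
  have hmin : ∀ x ∈ f.val.support, ¬ x < m := fun x hx hlt => hlt.2 (hmin' hx hlt.1)
  refine ⟨m, hm, fun x hx => ?_⟩
  rcases hc x hx m hm with h | h
  · exact le_of_eq (eq_of_le_of_not_lt h (hmin x hx)).symm
  · exact h

lemma exp_le_of_ub {f : Lottery (ℝ × ℝ)} {M : ℝ × ℝ}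
    (hub : ∀ x ∈ f.val.support, x ≤ M) : expLot f ≤ M := by
  rw [Prod.le_def]
  constructor
  · calc (expLot f).1 = ∑ o ∈ f.val.support, f.val o * o.1 := rfl
      _ ≤ ∑ o ∈ f.val.support, f.val o * M.1 := Finset.sum_le_sum fun o ho =>
          mul_le_mul_of_nonneg_left ((Prod.le_def.1 (hub o ho)).1) (f.nonneg o)
      _ = M.1 := by rw [← Finset.sum_mul, total_sum, one_mul]
  · calc (expLot f).2 = ∑ o ∈ f.val.support, f.val o * o.2 := rfl
      _ ≤ ∑ o ∈ f.val.support, f.val o * M.2 := Finset.sum_le_sum fun o ho =>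
          mul_le_mul_of_nonneg_left ((Prod.le_def.1 (hub o ho)).2) (f.nonneg o)
      _ = M.2 := by rw [← Finset.sum_mul, total_sum, one_mul]

lemma lb_le_exp {f : Lottery (ℝ × ℝ)} {m : ℝ × ℝ}
    (hlb : ∀ x ∈ f.val.support, m ≤ x) : m ≤ expLot f := by
  rw [Prod.le_def]
  constructor
  · calc m.1 = ∑ o ∈ f.val.support, f.val o * m.1 := by
          rw [← Finset.sum_mul, total_sum, one_mul]
      _ ≤ ∑ o ∈ f.val.support, f.val o * o.1 := Finset.sum_le_sum fun o ho =>
          mul_le_mul_of_nonneg_left ((Prod.le_def.1 (hlb o ho)).1) (f.nonneg o)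
      _ = (expLot f).1 := rfl
  · calc m.2 = ∑ o ∈ f.val.support, f.val o * m.2 := by
          rw [← Finset.sum_mul, total_sum, one_mul]
      _ ≤ ∑ o ∈ f.val.support, f.val o * o.2 := Finset.sum_le_sum fun o ho =>
          mul_le_mul_of_nonneg_left ((Prod.le_def.1 (hlb o ho)).2) (f.nonneg o)
      _ = (expLot f).2 := rfl

lemma forced_eq_aux {f : Lottery (ℝ × ℝ)} (φ : ℝ × ℝ → ℝ) (c : ℝ)
    (hφ : ∀ x ∈ f.val.support, φ x ≤ c)
    (hsum : ∑ o ∈ f.val.support, f.val o * φ o = c) :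
    ∀ x ∈ f.val.support, φ x = c := by
  intro x hx
  have h0 : ∑ o ∈ f.val.support, f.val o * (c - φ o) = 0 := by
    have expand : ∑ o ∈ f.val.support, f.val o * (c - φ o)
        = (∑ o ∈ f.val.support, f.val o) * c - ∑ o ∈ f.val.support, f.val o * φ o := by
      rw [Finset.sum_mul, ← Finset.sum_sub_distrib]
      exact Finset.sum_congr rfl fun o _ => by ring
    rw [expand, total_sum, hsum]; ring
  have hterm := (Finset.sum_eq_zero_iff_of_nonneg (fun o ho =>
    mul_nonneg (f.nonneg o) (sub_nonneg.2 (hφ o ho)))).1 h0 x hx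
  have hfx : f.val x ≠ 0 := Finsupp.mem_support_iff.1 hx
  rcases mul_eq_zero.1 hterm with h | h
  · exact absurd h hfx
  · linarith [sub_eq_zero.1 h]

lemma eq_of_exp_eq_ub {f : Lottery (ℝ × ℝ)} {M : ℝ × ℝ}
    (hub : ∀ x ∈ f.val.support, x ≤ M) (he : expLot f = M) :
    ∀ x ∈ f.val.support, x = M := by
  intro x hx
  have h1 := forced_eq_aux (fun o => o.1) M.1
    (fun o ho => (Prod.le_def.1 (hub o ho)).1)
    (by rw [show (∑ o ∈ f.val.support, f.val o * o.1) = (expLot f).1 from rfl, he]) x hx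
  have h2 := forced_eq_aux (fun o => o.2) M.2
    (fun o ho => (Prod.le_def.1 (hub o ho)).2)
    (by rw [show (∑ o ∈ f.val.support, f.val o * o.2) = (expLot f).2 from rfl, he]) x hx
  exact Prod.ext_iff.2 ⟨h1, h2⟩

lemma forced_eq_aux' {f : Lottery (ℝ × ℝ)} (φ : ℝ × ℝ → ℝ) (c : ℝ)
    (hφ : ∀ x ∈ f.val.support, c ≤ φ x)
    (hsum : ∑ o ∈ f.val.support, f.val o * φ o = c) :
    ∀ x ∈ f.val.support, φ x = c := by
  intro x hx
  have := forced_eq_aux (fun o => -(φ o)) (-c)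
    (fun o ho => neg_le_neg (hφ o ho))
    (by rw [show (∑ o ∈ f.val.support, f.val o * -(φ o))
        = -(∑ o ∈ f.val.support, f.val o * φ o) from by
          rw [← Finset.sum_neg_distrib]
          exact Finset.sum_congr rfl fun o _ => by ring, hsum]) x hx
  have h' : -(φ x) = -c := this
  linarith

lemma eq_of_exp_eq_lb {f : Lottery (ℝ × ℝ)} {m : ℝ × ℝ}
    (hlb : ∀ x ∈ f.val.support, m ≤ x) (he : expLot f = m) :
    ∀ x ∈ f.val.support, x = m := by
  intro x hx
  have h1 := forced_eq_aux' (fun o => o.1) m.1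
    (fun o ho => (Prod.le_def.1 (hlb o ho)).1)
    (by rw [show (∑ o ∈ f.val.support, f.val o * o.1) = (expLot f).1 from rfl, he]) x hx
  have h2 := forced_eq_aux' (fun o => o.2) m.2
    (fun o ho => (Prod.le_def.1 (hlb o ho)).2)
    (by rw [show (∑ o ∈ f.val.support, f.val o * o.2) = (expLot f).2 from rfl, he]) x hx
  exact Prod.ext_iff.2 ⟨h1, h2⟩

lemma cpl_delta {x y : ℝ × ℝ} (h : y ≤ x) : Cpl (delta x) (delta y) := by
  classical
  refine ⟨1, fun _ => x, fun _ => y, fun _ => 1, fun _ => zero_le_one, ?_, ?_, fun _ => h⟩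
  · intro o
    rw [delta_val]
    by_cases hxo : x = o <;> simp [hxo, Finset.filter_const]
  · intro o
    rw [delta_val]
    by_cases hyo : y = o <;> simp [hyo, Finset.filter_const]

lemma rel_exp_le {f g : Lottery (ℝ × ℝ)} (h : PrefRel f g) : expLot g ≤ expLot f := by
  rcases h with h | ⟨k, c, _, _, h1, h2, h3⟩
  · exact rtc_exp_le h
  · exact (rtc_exp_le h3).trans (h2.trans (rtc_exp_le h1))

lemma delta_rel_iff {x y : ℝ × ℝ} : PrefRel (delta x) (delta y) ↔ y ≤ x := by
  constructor
  · intro h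
    have := rel_exp_le h
    rwa [exp_delta, exp_delta] at this
  · intro h
    exact Or.inl (Relation.ReflTransGen.single (cpl_delta h))

lemma chain_delta (x : ℝ × ℝ) : ChainL (delta x) := by
  intro o ho o' ho'
  rw [supp_delta, Finset.mem_singleton] at ho ho'
  subst ho; subst ho'
  exact Or.inl le_rfl

lemma rel_refl (f : Lottery (ℝ × ℝ)) : PrefRel f f := Or.inl Relation.ReflTransGen.refl

lemma rel_trans {f g k : Lottery (ℝ × ℝ)} (hfg : PrefRel f g) (hgk : PrefRel g k) : PrefRel f k := by
  rcases hfg with h1 | ⟨h, c, ch, cc, ha, hb, hc2⟩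
  · rcases hgk with h2 | ⟨h', c', ch', cc', ha', hb', hc'⟩
    · exact Or.inl (h1.trans h2)
    · exact Or.inr ⟨h', c', ch', cc', h1.trans ha', hb', hc'⟩
  · rcases hgk with h2 | ⟨h', c', ch', cc', ha', hb', hc'⟩
    · exact Or.inr ⟨h, c, ch, cc, ha, hb, hc2.trans h2⟩
    · refine Or.inr ⟨h, c', ch, cc', ha, ?_, hc'⟩
      calc expLot c' ≤ expLot h' := hb'
        _ ≤ expLot g := rtc_exp_le ha'
        _ ≤ expLot c := rtc_exp_le hc2
        _ ≤ expLot h := hb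

lemma rel_symm_of_exp_eq {f g : Lottery (ℝ × ℝ)} (h : PrefRel f g)
    (he : expLot f = expLot g) : PrefRel g f := by
  rcases h with h1 | ⟨k, c, ch, cc, ha, hb, hc2⟩
  · rw [rtc_eq h1 he]
    exact rel_refl g
  · have e1 : expLot g ≤ expLot c := rtc_exp_le hc2
    have e2 : expLot k ≤ expLot f := rtc_exp_le ha
    have efk : expLot f = expLot k :=
      le_antisymm (by calc expLot f = expLot g := he
        _ ≤ expLot c := e1
        _ ≤ expLot k := hb) e2
    have ecg : expLot c = expLot g :=
      le_antisymm (by calc expLot c ≤ expLot k := hb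
        _ ≤ expLot f := e2
        _ = expLot g := he) e1
    have hfk : f = k := rtc_eq ha efk
    have hcg : c = g := rtc_eq hc2 ecg
    refine Or.inr ⟨g, f, ?_, ?_, Relation.ReflTransGen.refl, le_of_eq he,
      Relation.ReflTransGen.refl⟩
    · rw [← hcg]; exact cc
    · rw [hfk]; exact ch

lemma spref_delta {o o' : ℝ × ℝ} (hle : o' ≤ o) (hne : o' ≠ o) :
    SPref PrefRel (delta o) (delta o') :=
  ⟨delta_rel_iff.2 hle, fun hc => hne (le_antisymm hle (delta_rel_iff.1 hc))⟩

end Statement10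

end Statement10Proof

/-- There exists a preorder on Δ satisfying Pareto, Converse Pareto,
Good Expectations, the Stochastic Dominance axiom, and Negative Dominance. -/
theorem statement10 :
    ∃ R : Lottery (ℝ × ℝ) → Lottery (ℝ × ℝ) → Prop,
      Reflexive R ∧ Transitive R ∧ Pareto R ∧ ConvPareto R ∧
      GoodExp R ∧ StochDomAx R ∧ NegDominance R := by
  classical
  open Statement10 in
  refine ⟨PrefRel, fun f => rel_refl f, fun f g k => rel_trans, ?_, ?_, ?_, ?_, ?_⟩
  · -- Pareto
    intro x y x' y' h1 h2
    exact delta_rel_iff.2 (Prod.mk_le_mk.2 ⟨h1, h2⟩)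
  · -- Converse Pareto
    intro x y x' y' h
    exact Prod.mk_le_mk.1 (delta_rel_iff.1 h)
  · -- Good Expectations
    intro f hGood
    have hchain : ChainL f := by
      intro o ho o' ho'
      rcases hGood o ho o' ho' with h | h
      · exact Or.inr (delta_rel_iff.1 h)
      · exact Or.inl (delta_rel_iff.1 h)
    constructor
    · exact Or.inr ⟨f, delta (expLot f), hchain, chain_delta _,
        Relation.ReflTransGen.refl, le_of_eq (exp_delta _), Relation.ReflTransGen.refl⟩
    · exact Or.inr ⟨delta (expLot f), f, chain_delta _, hchain,
        Relation.ReflTransGen.refl, le_of_eq (exp_delta _).symm, Relation.ReflTransGen.refl⟩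
  · -- Stochastic Dominance axiom
    intro f g hsd
    obtain ⟨n, hn, a, b, p, hp, hsum, hf, hg, hR, i0, hi0⟩ := hsd
    have hab : ∀ i, b i ≤ a i := fun i => delta_rel_iff.1 (hR i)
    have hcpl : Cpl f g := ⟨n, a, b, p, fun i => (hp i).1.le, hf, hg, hab⟩
    have hstrict : (b i0).1 < (a i0).1 ∨ (b i0).2 < (a i0).2 := by
      have hnab : ¬ a i0 ≤ b i0 := fun hle => hi0.2 (delta_rel_iff.2 hle)
      by_contra hcon
      push_neg at hcon
      exact hnab (Prod.le_def.2 ⟨hcon.1, hcon.2⟩)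
    have hsum_strict : (expLot g).1 + (expLot g).2 < (expLot f).1 + (expLot f).2 := by
      rw [exp_fst_repr hf, exp_fst_repr hg, exp_snd_repr hf, exp_snd_repr hg,
        ← Finset.sum_add_distrib, ← Finset.sum_add_distrib]
      refine Finset.sum_lt_sum (fun i _ => ?_) ⟨i0, Finset.mem_univ i0, ?_⟩
      · have h1 := (Prod.le_def.1 (hab i)).1
        have h2 := (Prod.le_def.1 (hab i)).2
        have h3 := (hp i).1
        have g1 : p i * (b i).1 ≤ p i * (a i).1 := mul_le_mul_of_nonneg_left h1 h3.le
        have g2 : p i * (b i).2 ≤ p i * (a i).2 := mul_le_mul_of_nonneg_left h2 h3.le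
        linarith
      · have h1 := (Prod.le_def.1 (hab i0)).1
        have h2 := (Prod.le_def.1 (hab i0)).2
        have hpos := (hp i0).1
        rcases hstrict with h | h
        · have g1 : p i0 * (b i0).1 < p i0 * (a i0).1 := mul_lt_mul_of_pos_left h hpos
          have g2 : p i0 * (b i0).2 ≤ p i0 * (a i0).2 := mul_le_mul_of_nonneg_left h2 hpos.le
          linarith
        · have g1 : p i0 * (b i0).1 ≤ p i0 * (a i0).1 := mul_le_mul_of_nonneg_left h1 hpos.le
          have g2 : p i0 * (b i0).2 < p i0 * (a i0).2 := mul_lt_mul_of_pos_left h hpos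
          linarith
    refine ⟨Or.inl (Relation.ReflTransGen.single hcpl), fun hgf => ?_⟩
    have := rel_exp_le hgf
    rw [Prod.le_def] at this
    linarith [this.1, this.2]
  · -- Negative Dominance
    intro f g hS
    obtain ⟨h1, h2⟩ := hS
    have hexp : expLot f ≠ expLot g := fun he => h2 (rel_symm_of_exp_eq h1 he)
    rcases h1 with hr | ⟨h, c, chH, chC, hfh, hec, hcg⟩
    · obtain ⟨o, ho, o', ho', hle, hne⟩ := rtc_witness hr hexp
      exact ⟨o, ho, o', ho', spref_delta hle hne⟩
    · obtain ⟨M, hM, hMub⟩ := chain_max chH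
      obtain ⟨m, hm, hmlb⟩ := chain_min chC
      obtain ⟨o, ho, hMo⟩ := rtc_up hfh M hM
      obtain ⟨o', ho', hom⟩ := rtc_down hcg m hm
      have q1 : m ≤ expLot c := lb_le_exp hmlb
      have q2 : expLot h ≤ M := exp_le_of_ub hMub
      by_cases hoo : o' = o
      · -- degenerate case: the whole chain of inequalities collapses
        have hoM : o ≤ m := by rw [← hoo]; exact hom
        have hMm : m = M := le_antisymm (q1.trans (hec.trans q2)) (hMo.trans hoM)
        have hMe : expLot h = M := le_antisymm q2
          (hMo.trans (hoM.trans (q1.trans hec)))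
        have hme : expLot c = m := le_antisymm
          ((hec.trans q2).trans (hMo.trans hoM)) q1
        have hallh : ∀ x ∈ h.val.support, x = M := eq_of_exp_eq_ub hMub hMe
        have hallc : ∀ x ∈ c.val.support, x = m := eq_of_exp_eq_lb hmlb hme
        by_cases hfh' : expLot f = expLot h
        · have hcg' : expLot c ≠ expLot g := by
            intro hcge
            apply hexp
            calc expLot f = expLot h := hfh'
              _ = M := hMe
              _ = m := hMm.symm
              _ = expLot c := hme.symm
              _ = expLot g := hcge
          obtain ⟨u, hu, v, hv, hvu, hvne⟩ := rtc_witness hcg hcg'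
          have hum : u = m := hallc u hu
          refine ⟨o, ho, v, hv, spref_delta ?_ ?_⟩
          · calc v ≤ u := hvu
              _ = m := hum
              _ = M := hMm
              _ ≤ o := hMo
          · intro hvo
            apply hvne
            have hmv : m ≤ v := by
              rw [hvo]
              exact (le_of_eq hMm).trans hMo
            have hvm : v = m := le_antisymm (hvu.trans (le_of_eq hum)) hmv
            rw [hvm, hum]
        · obtain ⟨u, hu, v, hv, hvu, hvne⟩ := rtc_witness hfh hfh'
          have hvM : v = M := hallh v hv
          refine ⟨u, hu, o', ho', spref_delta ?_ ?_⟩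
          · calc o' ≤ m := hom
              _ = M := hMm
              _ = v := hvM.symm
              _ ≤ u := hvu
          · intro heq
            apply hvne
            have huv : u ≤ v := by
              rw [← heq]
              calc o' ≤ m := hom
                _ = M := hMm
                _ = v := hvM.symm
            exact le_antisymm hvu huv
      · exact ⟨o, ho, o', ho',
          spref_delta (hom.trans (q1.trans (hec.trans (q2.trans hMo)))) hoo⟩
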